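/- Let x̄_1,…,x̄_n be pairwise distinct points in ℝ^{d} and let q_1,…,q_n be arbitrary real numbers. Then there exists a polynomial function P : ℝ^{d} → ℝ (a real multivariate polynomial in d variables) of total degree at most n − 1 such that P(x̄_j) = q_j for all j ∈ {1,…,n}. -/

import Mathlib

noncomputable section

open MvPolynomial in
theorem lagrange_aux (n d : ℕ) (xbar : Fin n → EuclideanSpace ℝ (Fin d))
    (hx : Function.Injective xbar) (j : Fin n) :
    ∃ L : MvPolynomial (Fin d) ℝ, L.totalDegree ≤ n - 1 ∧
      ∀ i : Fin n, MvPolynomial.eval (fun k => xbar i k) L = if i = j then 1 else 0 := by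
  classical
  have hk : ∀ i : Fin n, i ≠ j → ∃ k, xbar i k ≠ xbar j k := by
    intro i hij
    by_contra h
    push_neg at h
    exact hij (hx (PiLp.ext h))
  choose k hkne using hk
  refine ⟨∏ i ∈ (Finset.univ.erase j).attach,
    MvPolynomial.C ((xbar j (k i (Finset.mem_erase.mp i.2).1) -
        xbar i (k i (Finset.mem_erase.mp i.2).1))⁻¹) *
      (MvPolynomial.X (k i (Finset.mem_erase.mp i.2).1) -
        MvPolynomial.C (xbar (i : Fin n) (k i (Finset.mem_erase.mp i.2).1))), ?_, ?_⟩
  · calc (∏ i ∈ (Finset.univ.erase j).attach, _ : MvPolynomial (Fin d) ℝ).totalDegree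
        ≤ ∑ i ∈ (Finset.univ.erase j).attach, 1 := by
          refine le_trans (MvPolynomial.totalDegree_finset_prod _ _) ?_
          refine Finset.sum_le_sum fun i _ => ?_
          refine le_trans (MvPolynomial.totalDegree_mul _ _) ?_
          simp only [MvPolynomial.totalDegree_C, zero_add]
          refine le_trans (MvPolynomial.totalDegree_sub_C_le _ _) ?_
          simp [MvPolynomial.totalDegree_X]
      _ = n - 1 := by
          simp [Finset.card_erase_of_mem]
  · intro i
    simp only [map_prod, map_mul, map_sub, MvPolynomial.eval_C, MvPolynomial.eval_X]
    by_cases hij : i = j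
    · subst hij
      rw [if_pos rfl]
      refine Finset.prod_eq_one fun m _ => ?_
      rw [inv_mul_eq_one₀]
      exact sub_ne_zero_of_ne (Ne.symm (hkne m (Finset.mem_erase.mp m.2).1))
    · rw [if_neg hij]
      refine Finset.prod_eq_zero (Finset.mem_attach _ ⟨i, Finset.mem_erase.mpr ⟨hij, Finset.mem_univ i⟩⟩) ?_
      simp

theorem multivariate_polynomial_interpolation
    (n d : ℕ) (xbar : Fin n → EuclideanSpace ℝ (Fin d))
    (hx : Function.Injective xbar) (q : Fin n → ℝ) :
    ∃ P : MvPolynomial (Fin d) ℝ, P.totalDegree ≤ n - 1 ∧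
      ∀ j : Fin n, MvPolynomial.eval (fun k => xbar j k) P = q j := by
  classical
  choose L hLdeg hLeval using lagrange_aux n d xbar hx
  refine ⟨∑ j, MvPolynomial.C (q j) * L j, ?_, ?_⟩
  · refine le_trans (MvPolynomial.totalDegree_finset_sum _ _) ?_
    refine Finset.sup_le fun j _ => ?_
    refine le_trans (MvPolynomial.totalDegree_mul _ _) ?_
    simpa using hLdeg j
  · intro j
    simp only [map_sum, map_mul, MvPolynomial.eval_C, hLeval]
    simp
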